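/- As formal power series, (q;q)_∞³ = Σ_{n≥1, gcd(n,4)=1 or n odd} χ(n) · n · q^{(n²-1)/8}, equivalently Π_{m≥1}(1-q^m)³ = Σ_{n≥1} χ(n) n q^{(n²-1)/8}, where χ(n) = (-4/n) is the Kronecker symbol (χ(n)=1 if n≡1 mod 4, χ(n)=-1 if n≡3 mod 4, χ(n)=0 if n even). -/

import Mathlib

open scoped Classical

/-- The Kronecker symbol `(-4/n)`. -/
def chi (n : ℕ) : ℤ :=
  if n % 4 = 1 then 1 else if n % 4 = 3 then -1 else 0

open PowerSeries

/-- `Pp a b = ∏_{j=a}^{b} (1 - X^j)` in `ℤ[[X]]`. -/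
noncomputable def Pp (a b : ℕ) : PowerSeries ℤ := ∏ j ∈ Finset.Icc a b, (1 - X ^ j)

lemma Pp_top (a b : ℕ) (h : a ≤ b + 1) : Pp a (b+1) = Pp a b * (1 - X^(b+1)) := by
  unfold Pp; rw [Finset.prod_Icc_succ_top h]

lemma Pp_bot (a b : ℕ) (h : a ≤ b) : Pp a b = (1 - X^a) * Pp (a+1) b := by
  unfold Pp
  rw [← Finset.insert_Icc_add_one_left_eq_Icc h, Finset.prod_insert (by simp)]

lemma Pp_empty (a b : ℕ) (h : b < a) : Pp a b = 1 := by
  unfold Pp; rw [Finset.Icc_eq_empty (by omega), Finset.prod_empty]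

lemma Pp_zero (b : ℕ) : Pp 0 b = 0 := by
  rw [Pp_bot 0 b (by omega)]; simp

lemma Pp_self (a : ℕ) : Pp a a = 1 - X^a := by
  unfold Pp; rw [Finset.Icc_self, Finset.prod_singleton]

/-- Triangular numbers. -/
def trg : ℕ → ℕ
  | 0 => 0
  | k+1 => trg k + (k+1)

lemma trg_ge (k : ℕ) : k ≤ trg k := by
  induction k with
  | zero => simp [trg]
  | succ k ih => show k + 1 ≤ trg k + (k+1); omega

lemma trg_strictMono : StrictMono trg := by
  apply strictMono_nat_of_lt_succ
  intro n
  show trg n < trg n + (n+1)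
  omega

lemma two_trg (k : ℕ) : 2 * trg k = k * (k+1) := by
  induction k with
  | zero => rfl
  | succ k ih => show 2 * (trg k + (k+1)) = _; rw [Nat.mul_add, ih]; ring

/-- The summand. -/
noncomputable def Tm (n k : ℕ) : PowerSeries ℤ :=
  ((-1)^k * (2*(k:ℤ)+1) : ℤ) • (X^(trg k) * Pp (n+1-k) n * Pp (n+k+2) (2*n+1))

/-- The telescoping certificate. -/
noncomputable def Gg (n k : ℕ) : PowerSeries ℤ :=
  if k = 0 then 0
  else if k = n+1 then ((-1)^n * (2*(n:ℤ)+3)) • (X^(trg (n+1)) * Pp 1 (n+1))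
  else if n+2 ≤ k then 0
  else ((-1)^(k+1) : ℤ) •
    (((2*(k:ℤ)+1) • X^(trg (k-1)+n+1) + (2*(k:ℤ)-1) • X^(trg k + n+1)
      - (2*(k:ℤ)-1) • X^(trg (k-1)+2*n+2) - (2*(k:ℤ)+1) • X^(trg k + 2*n+2))
     * Pp (n+2-k) (n+1) * Pp (n+k+2) (2*n+1))

lemma case_00 : Tm 1 0 = (1 - X^1)^3 * Tm 0 0 + Gg 0 1 - Gg 0 0 := by
  rw [Tm, Tm, Gg, Gg, if_pos rfl, if_neg (by omega), if_pos rfl]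
  norm_num
  rw [Pp_self 1, show trg 1 = 1 from rfl, show trg 0 = 0 from rfl]
  rw [Pp_empty 2 1 (by omega), Pp_empty 1 0 (by omega), Pp_self 3]
  ring

lemma case_0 (e : ℕ) : Tm (e+2) 0 = (1 - X^(e+2))^3 * Tm (e+1) 0 + Gg (e+1) 1 - Gg (e+1) 0 := by
  rw [Tm, Tm, Gg, Gg, if_pos rfl, if_neg (by omega), if_neg (by omega), if_neg (by omega)]
  norm_num
  simp only [show e+2+0+2 = e+4 from by omega, show 2*(e+2)+1 = 2*e+5 from by omega,
      show e+1+0+2 = e+3 from by omega, show 2*(e+1)+1 = 2*e+3 from by omega,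
      show e+1+1 = e+2 from by omega,
      show trg 1 = 1 from rfl, show trg 0 = 0 from rfl]
  rw [Pp_empty (e+3) (e+2) (by omega), Pp_empty (e+2) (e+1) (by omega), Pp_self (e+2)]
  rw [show Pp (e+4) (2*e+5) =
        Pp (e+4) (2*e+3) * (1 - X^(2*e+4)) * (1 - X^(2*e+5)) from by
      rw [show 2*e+5 = (2*e+4)+1 from by omega, Pp_top _ _ (by omega),
          show 2*e+4 = (2*e+3)+1 from by omega, Pp_top _ _ (by omega)],
      show Pp (e+3) (2*e+3) = (1 - X^(e+3)) * Pp (e+4) (2*e+3) from Pp_bot _ _ (by omega)]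
  ring

lemma case_gen (j d : ℕ) :
    Tm (j+d+3) (j+1) = (1 - X^(j+d+3))^3 * Tm (j+d+2) (j+1)
      + Gg (j+d+2) (j+2) - Gg (j+d+2) (j+1) := by
  rw [Tm, Tm, Gg, Gg]
  rw [if_neg (by omega), if_neg (by omega), if_neg (by omega),
      if_neg (by omega), if_neg (by omega), if_neg (by omega)]
  simp only [show j+1-1 = j from by omega, show j+2-1 = j+1 from by omega,
      show j+d+3+1-(j+1) = d+3 from by omega,
      show j+d+2+1-(j+1) = d+2 from by omega,
      show j+d+2+2-(j+2) = d+2 from by omega,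
      show j+d+2+2-(j+1) = d+3 from by omega,
      show j+d+2+1 = j+d+3 from by omega,
      show j+d+3+(j+1)+2 = 2*j+d+6 from by omega,
      show 2*(j+d+3)+1 = 2*j+2*d+7 from by omega,
      show j+d+2+(j+1)+2 = 2*j+d+5 from by omega,
      show j+d+2+(j+2)+2 = 2*j+d+6 from by omega,
      show 2*(j+d+2)+1 = 2*j+2*d+5 from by omega,
      show trg (j+2) = trg j + (j+1) + (j+2) from rfl,
      show trg (j+1) = trg j + (j+1) from rfl]
  rw [show Pp (d+2) (j+d+2) = (1 - X^(d+2)) * Pp (d+3) (j+d+2) from Pp_bot _ _ (by omega),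
      show Pp (d+3) (j+d+3) = Pp (d+3) (j+d+2) * (1 - X^(j+d+3)) from by
        rw [show j+d+3 = (j+d+2)+1 from by omega, Pp_top _ _ (by omega)],
      show Pp (d+2) (j+d+3) = (1 - X^(d+2)) * (Pp (d+3) (j+d+2) * (1 - X^(j+d+3))) from by
        rw [show j+d+3 = (j+d+2)+1 from by omega, Pp_top _ _ (by omega),
            Pp_bot _ _ (by omega)]; ring,
      show Pp (2*j+d+5) (2*j+2*d+5) = (1 - X^(2*j+d+5)) * Pp (2*j+d+6) (2*j+2*d+5) from
        Pp_bot _ _ (by omega),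
      show Pp (2*j+d+6) (2*j+2*d+7) =
          Pp (2*j+d+6) (2*j+2*d+5) * (1 - X^(2*j+2*d+6)) * (1 - X^(2*j+2*d+7)) from by
        rw [show 2*j+2*d+7 = (2*j+2*d+6)+1 from by omega, Pp_top _ _ (by omega),
            show 2*j+2*d+6 = (2*j+2*d+5)+1 from by omega, Pp_top _ _ (by omega)]]
  simp only [zsmul_eq_mul]
  push_cast
  ring

lemma case_n (j : ℕ) : Tm (j+2) (j+1) = (1 - X^(j+2))^3 * Tm (j+1) (j+1)
    + Gg (j+1) (j+2) - Gg (j+1) (j+1) := by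
  rw [Tm, Tm, Gg, Gg, if_neg (by omega), if_pos rfl, if_neg (by omega), if_neg (by omega),
      if_neg (by omega)]
  simp only [show j+2+1-(j+1) = 2 from by omega, show j+2+(j+1)+2 = 2*j+5 from by omega,
      show 2*(j+2)+1 = 2*j+5 from by omega,
      show j+1+1-(j+1) = 1 from by omega, show j+1+(j+1)+2 = 2*j+4 from by omega,
      show 2*(j+1)+1 = 2*j+3 from by omega, show j+1+1 = j+2 from by omega,
      show j+1-1 = j from by omega,
      show trg (j+2) = trg j + (j+1) + (j+2) from rfl,
      show trg (j+1) = trg j + (j+1) from rfl]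
  rw [Pp_self (2*j+5), Pp_empty (2*j+4) (2*j+3) (by omega),
      show Pp 1 (j+1) = (1-X^1) * Pp 2 (j+1) from Pp_bot _ _ (by omega),
      show Pp 2 (j+2) = Pp 2 (j+1) * (1 - X^(j+2)) from by
        rw [show j+2 = (j+1)+1 from by omega, Pp_top _ _ (by omega)],
      show Pp 1 (j+2) = (1-X^1) * (Pp 2 (j+1) * (1 - X^(j+2))) from by
        rw [show j+2 = (j+1)+1 from by omega, Pp_top _ _ (by omega), Pp_bot _ _ (by omega)]
        ring]
  simp only [zsmul_eq_mul]
  push_cast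
  ring

lemma case_top (n : ℕ) : Tm (n+1) (n+1) = (1 - X^(n+1))^3 * Tm n (n+1)
    + Gg n (n+2) - Gg n (n+1) := by
  rw [Tm, Tm, Gg, Gg, if_neg (by omega), if_neg (by omega), if_pos (by omega),
      if_neg (by omega), if_pos rfl]
  simp only [show n+1+1-(n+1) = 1 from by omega, show n+1-(n+1) = 0 from by omega,
      show n+1+(n+1)+2 = 2*n+4 from by omega, show 2*(n+1)+1 = 2*n+3 from by omega,
      show trg (n+1) = trg n + (n+1) from rfl]
  rw [Pp_zero n, Pp_empty (2*n+4) (2*n+3) (by omega)]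
  simp only [zsmul_eq_mul]
  push_cast
  ring

lemma step (n k : ℕ) (hk : k ≤ n + 1) :
    Tm (n+1) k = (1 - X^(n+1))^3 * Tm n k + Gg n (k+1) - Gg n k := by
  rcases k with _ | j
  · rcases n with _ | e
    · exact case_00
    · exact case_0 e
  · by_cases h1 : j + 1 = n + 1
    · have hn : n = j := by omega
      subst hn
      exact case_top n
    · by_cases h2 : j + 1 = n
      · have hn : n = j + 1 := by omega
        subst hn
        exact case_n j
      · obtain ⟨d, hd⟩ : ∃ d, n = j + d + 2 := ⟨n - j - 2, by omega⟩
        subst hd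
        exact case_gen j d

lemma Tm_eq_zero (n k : ℕ) (h : n + 1 ≤ k) : Tm n k = 0 := by
  rw [Tm, show n+1-k = 0 from by omega, Pp_zero]
  simp

lemma Gg_zero_right (n : ℕ) : Gg n (n+2) = 0 := by
  rw [Gg, if_neg (by omega), if_neg (by omega), if_pos (by omega)]

lemma sum_Tm (n : ℕ) :
    ∑ k ∈ Finset.range (n+2), Tm n k = (Pp 1 n)^3 := by
  induction n with
  | zero =>
    rw [Finset.sum_range_succ, Finset.sum_range_one]
    rw [Tm_eq_zero 0 1 (by omega), Tm]
    norm_num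
    rw [show trg 0 = 0 from rfl]
    norm_num
    rw [Pp_empty 1 0 (by omega), Pp_empty 2 1 (by omega)]
    norm_num
  | succ n ih =>
    have h1 : ∑ k ∈ Finset.range (n+3), Tm (n+1) k
        = ∑ k ∈ Finset.range (n+2), Tm (n+1) k + Tm (n+1) (n+2) :=
      Finset.sum_range_succ _ _
    rw [show n+1+2 = n+3 from rfl, h1, Tm_eq_zero (n+1) (n+2) (by omega), add_zero]
    have h2 : ∀ k ∈ Finset.range (n+2),
        Tm (n+1) k = (1 - X^(n+1))^3 * Tm n k + (Gg n (k+1) - Gg n k) := by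
      intro k hk
      rw [step n k (by simpa using Nat.lt_succ_iff.mp (Finset.mem_range.mp hk))]
      ring
    rw [Finset.sum_congr rfl h2, Finset.sum_add_distrib, ← Finset.mul_sum, ih,
        Finset.sum_range_sub (fun k => Gg n k), Gg_zero_right, Gg,  if_pos rfl,
        sub_zero, add_zero]
    rw [show Pp 1 (n+1) = Pp 1 n * (1 - X^(n+1)) from Pp_top _ _ (by omega)]
    ring

lemma Pp_one_add (a b : ℕ) : ∃ V : PowerSeries ℤ, Pp a b = 1 + X^a * V := by
  induction b with
  | zero =>
    rcases a with _ | a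
    · exact ⟨-1, by rw [Pp_self]; simp⟩
    · exact ⟨0, by rw [Pp_empty _ _ (by omega)]; simp⟩
  | succ b ih =>
    obtain ⟨V, hV⟩ := ih
    by_cases h : a ≤ b + 1
    · refine ⟨V - X^(b+1-a) - V * X^(b+1), ?_⟩
      have hx : X^a * X^(b+1-a) = (X : PowerSeries ℤ)^(b+1) := by
        rw [← pow_add, show a + (b+1-a) = b+1 from by omega]
      rw [Pp_top _ _ h, hV]
      linear_combination hx
    · exact ⟨0, by rw [Pp_empty _ _ (by omega)]; simp⟩

lemma coeff_Tm (m k : ℕ) (hk : k ≤ m + 2) :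
    (coeff (R := ℤ) m) (Tm (m+1) k) = if trg k = m then (-1)^k * (2*(k:ℤ)+1) else 0 := by
  obtain ⟨V₁, h1⟩ := Pp_one_add (m+1+1-k) (m+1)
  obtain ⟨V₂, h2⟩ := Pp_one_add (m+1+k+2) (2*(m+1)+1)
  rw [show m+1+1-k = m+2-k from by omega] at h1
  rw [Tm, show m+1+1-k = m+2-k from by omega, h1, h2]
  set W : PowerSeries ℤ := V₁ + X^(m+1+k+2-(m+2-k)) * V₂
      + X^(m+1+k+2-(m+2-k)) * (X^(m+2-k) * (V₁ * V₂)) with hW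
  have e1 : (X : PowerSeries ℤ)^(m+1) * X^(trg k + (m+2-k) - (m+1)) = X^(trg k) * X^(m+2-k) := by
    rw [← pow_add, ← pow_add]
    congr 1
    have := trg_ge k
    omega
  have e2 : (X : PowerSeries ℤ)^(m+2-k) * X^(m+1+k+2-(m+2-k)) = X^(m+1+k+2) := by
    rw [← pow_add]
    congr 1
    omega
  have key : X^(trg k) * (1 + X^(m+2-k) * V₁) * (1 + X^(m+1+k+2) * V₂)
      = X^(trg k) + X^(m+1) * (X^(trg k + (m+2-k) - (m+1)) * W) := by
    calc X^(trg k) * (1 + X^(m+2-k) * V₁) * (1 + X^(m+1+k+2) * V₂)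
        = X^(trg k) + X^(trg k) * X^(m+2-k) * W := by rw [hW, ← e2]; ring
      _ = X^(trg k) + X^(m+1) * (X^(trg k + (m+2-k) - (m+1)) * W) := by rw [← e1]; ring
  rw [key, map_smul, map_add, coeff_X_pow]
  have hz : (coeff (R := ℤ) m) (X^(m+1) * (X^(trg k + (m+2-k) - (m+1)) * W)) = 0 := by
    rw [coeff_X_pow_mul', if_neg (by omega)]
  rw [hz, add_zero]
  by_cases h : trg k = m
  · rw [if_pos h, if_pos (h.symm), smul_eq_mul, mul_one]
  · rw [if_neg (fun hh => h hh.symm), if_neg h, smul_zero]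

lemma chi_odd (j : ℕ) : chi (2*j+1) = (-1)^j := by
  rcases Nat.even_or_odd j with ⟨l, hl⟩ | ⟨l, hl⟩
  · subst hl
    rw [chi, if_pos (by omega)]
    rw [show l + l = 2*l from by omega, pow_mul]
    norm_num
  · subst hl
    rw [chi, if_neg (by omega), if_pos (by omega), pow_succ, pow_mul]
    norm_num

lemma odd_div_eight (j : ℕ) : ((2*j+1)^2 - 1) / 8 = trg j := by
  have h : (2*j+1)^2 = 8 * trg j + 1 := by
    have := two_trg j
    nlinarith [two_trg j]
  omega

theorem jacobi_identity_reindexed (m : ℕ) :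
    PowerSeries.coeff (R := ℤ) m ((∏ n ∈ Finset.Icc 1 (m + 1), (1 - (X : PowerSeries ℤ) ^ n)) ^ 3) =
      if h : ∃ n : ℕ, 1 ≤ n ∧ n % 2 = 1 ∧ m = (n ^ 2 - 1) / 8 then
        chi h.choose * h.choose
      else 0 := by
  have hprod : (∏ n ∈ Finset.Icc 1 (m + 1), (1 - (X : PowerSeries ℤ) ^ n)) = Pp 1 (m+1) := rfl
  rw [hprod, ← sum_Tm (m+1), map_sum]
  have hco : ∀ k ∈ Finset.range (m+3),
      (coeff (R := ℤ) m) (Tm (m+1) k) = if trg k = m then (-1)^k * (2*(k:ℤ)+1) else 0 := by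
    intro k hk
    exact coeff_Tm m k (by have := Finset.mem_range.mp hk; omega)
  rw [show m+1+2 = m+3 from rfl, Finset.sum_congr rfl hco]
  by_cases h : ∃ n : ℕ, 1 ≤ n ∧ n % 2 = 1 ∧ m = (n ^ 2 - 1) / 8
  · rw [dif_pos h]
    obtain ⟨hc1, hc2, hc3⟩ := h.choose_spec
    obtain ⟨j, hj⟩ : ∃ j, h.choose = 2*j+1 := ⟨(h.choose - 1)/2, by omega⟩
    have hm : m = trg j := by rw [hc3, hj, odd_div_eight]
    have hsum : ∑ k ∈ Finset.range (m+3), (if trg k = m then (-1)^k * (2*(k:ℤ)+1) else 0)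
        = (-1)^j * (2*(j:ℤ)+1) := by
      rw [Finset.sum_eq_single j]
      · rw [if_pos hm.symm]
      · intro k _ hkj
        rw [if_neg]
        intro hkm
        exact hkj (trg_strictMono.injective (by omega))
      · intro hj'
        exfalso
        have := trg_ge j
        exact hj' (Finset.mem_range.mpr (by omega))
    rw [hsum, hj, chi_odd]
    push_cast
    ring
  · rw [dif_neg h]
    apply Finset.sum_eq_zero
    intro k _
    rw [if_neg]
    intro hkm
    exact h ⟨2*k+1, by omega, by omega, by rw [odd_div_eight]; omega⟩
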